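/- Let K be a finite type with at least 2 elements. For any W : K → ℝ with W k ≥ 0 for all k, and any a : Finset K → ℝ with a S ≥ 0 for all S, there exist functions L : K → Finset K → ℝ and r : K → Finset K → K → ℝ with L j S ≥ 0 and r k S i ≥ 0 everywhere, and r k S i = 0 whenever S.card ≤ 2, such that for every worker k and every S ⊆ Finset.univ with k ∈ S and S.card ≥ 2: W k * a (S.erase k) + (∑ i in Finset.univ \ S, r k (insert i S) i) = (∑ j in S.erase k, L j S) + (∑ i in S.erase k, r k S i). -/

import Mathlib

open Finset

noncomputable def cdcF {K : Type*} [Fintype K] [DecidableEq K]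
    (W : K → ℝ) (a : Finset K → ℝ) (k : K) (S : Finset K) : ℝ :=
  W k * a (S.erase k) +
    (S.card : ℝ)⁻¹ * ∑ i ∈ (Finset.univ \ S).attach,
      cdcF W a k (insert i.1 S)
termination_by (Finset.univ \ S).card
decreasing_by
  rcases i with ⟨i, hi⟩
  simp only [Finset.mem_sdiff, Finset.mem_univ, true_and] at hi
  have h : Finset.univ \ insert i S = (Finset.univ \ S).erase i := by
    ext x
    simp only [Finset.mem_sdiff, Finset.mem_univ, Finset.mem_erase, Finset.mem_insert, true_and]
    tauto
  rw [h]
  exact Finset.card_erase_lt_of_mem (by simp [hi])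

lemma cdcF_nonneg {K : Type*} [Fintype K] [DecidableEq K]
    (W : K → ℝ) (hW : ∀ k, 0 ≤ W k)
    (a : Finset K → ℝ) (ha : ∀ S, 0 ≤ a S) (k : K) (S : Finset K) :
    0 ≤ cdcF W a k S := by
  have H : ∀ n, ∀ S : Finset K, (Finset.univ \ S).card ≤ n → 0 ≤ cdcF W a k S := by
    intro n
    induction n with
    | zero =>
      intro S hS
      rw [cdcF]
      have h0 : Finset.univ \ S = ∅ := Finset.card_eq_zero.mp (Nat.le_zero.mp hS)
      rw [h0]
      simp [mul_nonneg (hW k) (ha _)]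
    | succ n ih =>
      intro S hS
      rw [cdcF]
      refine add_nonneg (mul_nonneg (hW k) (ha _)) (mul_nonneg (by positivity) ?_)
      refine Finset.sum_nonneg fun i _ => ?_
      rcases i with ⟨i, hi⟩
      simp only [Finset.mem_sdiff, Finset.mem_univ, true_and] at hi
      refine ih _ ?_
      have h : Finset.univ \ insert i S = (Finset.univ \ S).erase i := by
        ext x
        simp only [Finset.mem_sdiff, Finset.mem_univ, Finset.mem_erase, Finset.mem_insert, true_and]
        tauto
      rw [h]
      have := Finset.card_erase_lt_of_mem (show i ∈ Finset.univ \ S by simp [hi])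
      omega
  exact H _ S le_rfl

theorem cdc_feasible {K : Type*} [Fintype K] [DecidableEq K]
    (hK : 2 ≤ Fintype.card K)
    (W : K → ℝ) (hW : ∀ k, 0 ≤ W k)
    (a : Finset K → ℝ) (ha : ∀ S, 0 ≤ a S) :
    ∃ (L : K → Finset K → ℝ) (r : K → Finset K → K → ℝ),
      (∀ j S, 0 ≤ L j S) ∧ (∀ k S i, 0 ≤ r k S i) ∧
      (∀ k (S : Finset K) i, S.card ≤ 2 → r k S i = 0) ∧
      (∀ (k : K) (S : Finset K), k ∈ S → 2 ≤ S.card →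
        W k * a (S.erase k) + (∑ i ∈ Finset.univ \ S, r k (insert i S) i)
          = (∑ j ∈ S.erase k, L j S) + (∑ i ∈ S.erase k, r k S i)) := by
  classical
  refine ⟨fun j S => if S.card = 2 then ∑ k' ∈ S.erase j, cdcF W a k' S else 0,
    fun k S i => if 3 ≤ S.card ∧ i ∈ S.erase k then cdcF W a k S / ((S.card : ℝ) - 1) else 0,
    ?_, ?_, ?_, ?_⟩
  · intro j S
    dsimp only
    split
    · exact Finset.sum_nonneg fun k' _ => cdcF_nonneg W hW a ha k' S
    · exact le_refl 0
  · intro k S i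
    dsimp only
    split
    · rename_i h
      have h1 : (0:ℝ) < (S.card : ℝ) - 1 := by
        have : (3:ℝ) ≤ (S.card : ℝ) := by exact_mod_cast h.1
        linarith
      exact div_nonneg (cdcF_nonneg W hW a ha k S) h1.le
    · exact le_refl 0
  · intro k S i h
    dsimp only
    simp only [ite_eq_right_iff]
    intro hc
    omega
  · intro k S hk hcard
    dsimp only
    -- LHS equals cdcF W a k S
    have hLHS : W k * a (S.erase k) +
        (∑ i ∈ Finset.univ \ S, (if 3 ≤ (insert i S).card ∧ i ∈ (insert i S).erase k then
          cdcF W a k (insert i S) / (((insert i S).card : ℝ) - 1) else 0))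
        = cdcF W a k S := by
      rw [cdcF]
      congr 1
      rw [← Finset.sum_attach (Finset.univ \ S)
        (fun i => if 3 ≤ (insert i S).card ∧ i ∈ (insert i S).erase k then
          cdcF W a k (insert i S) / (((insert i S).card : ℝ) - 1) else 0)]
      rw [Finset.mul_sum]
      refine Finset.sum_congr rfl fun i _ => ?_
      rcases i with ⟨i, hi⟩
      simp only [Finset.mem_sdiff, Finset.mem_univ, true_and] at hi
      have hik : i ≠ k := fun h => hi (h ▸ hk)
      have hcard' : (insert i S).card = S.card + 1 := Finset.card_insert_of_notMem hi
      have hcond : 3 ≤ (insert i S).card ∧ i ∈ (insert i S).erase k := by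
        constructor
        · omega
        · exact Finset.mem_erase.mpr ⟨hik, Finset.mem_insert_self i S⟩
      rw [if_pos hcond, hcard']
      have hS0 : ((S.card : ℝ)) ≠ 0 := by
        have : (2:ℝ) ≤ (S.card : ℝ) := by exact_mod_cast hcard
        linarith
      push_cast
      field_simp
      rw [add_sub_cancel_right, mul_div_assoc, div_self hS0, mul_one]
    rw [hLHS]
    by_cases h2 : S.card = 2
    · -- size-2 case: r terms vanish, L sum equals cdcF
      have hr0 : ∀ i ∈ S.erase k,
          (if 3 ≤ S.card ∧ i ∈ S.erase k then cdcF W a k S / ((S.card : ℝ) - 1) else 0) = 0 :=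
        fun i _ => by rw [if_neg]; omega
      rw [Finset.sum_congr rfl hr0, Finset.sum_const_zero, add_zero]
      have h1 : (S.erase k).card = 1 := by rw [Finset.card_erase_of_mem hk, h2]
      obtain ⟨j, hj⟩ := Finset.card_eq_one.mp h1
      have hjm : j ∈ S.erase k := hj ▸ Finset.mem_singleton_self j
      have hjk : j ≠ k := (Finset.mem_erase.mp hjm).1
      have hjS : j ∈ S := (Finset.mem_erase.mp hjm).2
      have hSj : S.erase j = {k} := by
        ext x
        simp only [Finset.mem_erase, Finset.mem_singleton]
        constructor
        · rintro ⟨hxj, hxS⟩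
          by_contra hxk
          have hx : x ∈ S.erase k := Finset.mem_erase.mpr ⟨hxk, hxS⟩
          rw [hj] at hx
          exact hxj (Finset.mem_singleton.mp hx)
        · rintro rfl
          exact ⟨fun h => hjk h.symm, hk⟩
      rw [hj, Finset.sum_singleton, if_pos h2, hSj, Finset.sum_singleton]
    · -- size ≥ 3 case: L terms vanish, r sum equals cdcF
      have h3 : 3 ≤ S.card := by omega
      have hL0 : ∀ j ∈ S.erase k,
          (if S.card = 2 then ∑ k' ∈ S.erase j, cdcF W a k' S else 0) = 0 :=
        fun j _ => by rw [if_neg h2]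
      rw [Finset.sum_congr rfl hL0, Finset.sum_const_zero, zero_add]
      have hr : ∀ i ∈ S.erase k,
          (if 3 ≤ S.card ∧ i ∈ S.erase k then cdcF W a k S / ((S.card : ℝ) - 1) else 0)
            = cdcF W a k S / ((S.card : ℝ) - 1) :=
        fun i hi => by rw [if_pos ⟨h3, hi⟩]
      rw [Finset.sum_congr rfl hr, Finset.sum_const, Finset.card_erase_of_mem hk,
        nsmul_eq_mul]
      have hne : ((S.card : ℝ)) - 1 ≠ 0 := by
        have : (3:ℝ) ≤ (S.card : ℝ) := by exact_mod_cast h3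
        linarith
      have hcast : ((S.card - 1 : ℕ) : ℝ) = (S.card : ℝ) - 1 := by
        have : 1 ≤ S.card := by omega
        push_cast [this]
        ring
      rw [hcast]
      field_simp
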